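/- Let κ ∈ {3,4,5} and suppose every vertex v of a connected simple graph G of order n satisfies: n_0(v)=1, n_i(v) ≥ κ for 1 ≤ i ≤ e(v)−1. Then for every vertex v, σ(v) ≤ (1/(2κ))n² + ((κ−2)/(2κ))n + (κ−3)/(2κ). -/

import Mathlib

open Finset

lemma consec_nonneg (m : ℤ) : 0 ≤ m * (m + 1) := by
  rcases le_or_gt 0 m with h | h
  · exact mul_nonneg h (by omega)
  · nlinarith [mul_nonneg (by omega : (0:ℤ) ≤ -m) (by omega : (0:ℤ) ≤ -(m+1))]

lemma gauss (e : ℕ) : 2 * ∑ i ∈ Finset.Ico 1 e, (e - i) = e * (e - 1) := by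
  induction e with
  | zero => simp
  | succ m ih =>
    rcases Nat.eq_zero_or_pos m with rfl | hm
    · simp
    · rw [Finset.sum_Ico_succ_top hm]
      have h1 : ∑ i ∈ Finset.Ico 1 m, (m + 1 - i)
          = (∑ i ∈ Finset.Ico 1 m, (m - i)) + (m - 1) := by
        have : ∀ i ∈ Finset.Ico 1 m, (m + 1 - i) = (m - i) + 1 := by
          intro i hi
          have := Finset.mem_Ico.mp hi
          omega
        rw [Finset.sum_congr rfl this, Finset.sum_add_distrib, Finset.sum_const,
          Nat.card_Ico, smul_eq_mul, mul_one]
      rw [h1]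
      rcases m with _ | p
      · omega
      · have h2 : 2 * ∑ i ∈ Finset.Ico 1 (p+1), (p + 1 - i) = (p+1) * p := by
          simpa using ih
        have : (p + 1 + 1 - (p+1)) = 1 := by omega
        rw [this]
        have h3 : (p + 1 + 1 - 1) = p + 1 := by omega
        have h4 : (p + 1 - 1) = p := by omega
        rw [h3, h4]
        nlinarith [h2]

/-- If every vertex `v` of a connected graph `G` of order `n` has all
intermediate distance layers of size at least `κ` (with `κ ∈ {3,4,5}`), then
`σ(v) ≤ n²/(2κ) + (κ-2)n/(2κ) + (κ-3)/(2κ)` for every vertex `v`. -/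
theorem totalDistance_le_of_layer_bound {V : Type*} [Fintype V] [DecidableEq V]
    (G : SimpleGraph V) (hG : G.Connected) (k : ℕ)
    (hk : k = 3 ∨ k = 4 ∨ k = 5) (n : ℕ) (hn : n = Fintype.card V)
    (h0 : ∀ v : V, (Finset.univ.filter (fun u => G.dist v u = 0)).card = 1)
    (hlayer : ∀ v : V, ∀ i : ℕ, 1 ≤ i →
      i + 1 ≤ Finset.univ.sup (fun u => G.dist v u) →
      k ≤ (Finset.univ.filter (fun u => G.dist v u = i)).card) :
    ∀ v : V, ((∑ u : V, G.dist v u : ℕ) : ℚ) ≤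
      (n : ℚ) ^ 2 / (2 * k) + ((k : ℚ) - 2) * n / (2 * k) + ((k : ℚ) - 3) / (2 * k) := by
  intro v
  set e := Finset.univ.sup (fun u => G.dist v u) with he
  have hle : ∀ u : V, G.dist v u ≤ e := fun u => Finset.le_sup (Finset.mem_univ u)
  have hmem : ∀ u : V, u ∈ (Finset.univ : Finset V) →
      G.dist v u ∈ Finset.range (e + 1) := by
    intro u _
    simp [Nat.lt_succ_iff, hle u]
  set c : ℕ → ℕ := fun i => (Finset.univ.filter (fun u => G.dist v u = i)).card with hc
  have hcard : n = ∑ i ∈ Finset.range (e + 1), c i := by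
    rw [hn, ← Finset.card_univ]
    exact Finset.card_eq_sum_card_fiberwise hmem
  have hσ : ∑ u : V, G.dist v u = ∑ i ∈ Finset.range (e + 1), i * c i := by
    rw [← Finset.sum_fiberwise_of_maps_to hmem (fun u => G.dist v u)]
    refine Finset.sum_congr rfl fun i _ => ?_
    have : ∀ u ∈ Finset.univ.filter (fun u => G.dist v u = i), G.dist v u = i :=
      fun u hu => (Finset.mem_filter.mp hu).2
    rw [Finset.sum_congr rfl this, Finset.sum_const, smul_eq_mul, mul_comm]
  set S := ∑ i ∈ Finset.range (e + 1), (e - i) * c i with hS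
  -- total identity
  have hσS : (∑ u : V, G.dist v u) + S = e * n := by
    rw [hσ, hS, ← Finset.sum_add_distrib]
    have : ∀ i ∈ Finset.range (e + 1), i * c i + (e - i) * c i = e * c i := by
      intro i hi
      have := Finset.mem_range.mp hi
      rw [← add_mul]
      congr 1
      omega
    rw [Finset.sum_congr rfl this, ← Finset.mul_sum, ← hcard]
  -- lower bound on S
  have hc0 : c 0 = 1 := h0 v
  have hlayer' : ∀ i ∈ Finset.Ico 1 e, k ≤ c i := by
    intro i hi
    have h := Finset.mem_Ico.mp hi
    exact hlayer v i h.1 (by omega)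
  have hS2 : 2 * e + e * (e - 1) * k ≤ 2 * S := by
    have hsplit : S = (e - 0) * c 0 + ∑ i ∈ Finset.Ico 1 (e + 1), (e - i) * c i := by
      rw [hS, Finset.range_eq_Ico, Finset.sum_eq_sum_Ico_succ_bot (Nat.succ_pos e)]
    have hsub : ∑ i ∈ Finset.Ico 1 e, (e - i) * c i
        ≤ ∑ i ∈ Finset.Ico 1 (e + 1), (e - i) * c i :=
      Finset.sum_le_sum_of_subset (Finset.Ico_subset_Ico le_rfl (Nat.le_succ e))
    have hterm : ∑ i ∈ Finset.Ico 1 e, (e - i) * k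
        ≤ ∑ i ∈ Finset.Ico 1 e, (e - i) * c i :=
      Finset.sum_le_sum fun i hi => Nat.mul_le_mul le_rfl (hlayer' i hi)
    have hgauss : 2 * ∑ i ∈ Finset.Ico 1 e, (e - i) * k = e * (e - 1) * k := by
      have h2 : 2 * ∑ i ∈ Finset.Ico 1 e, (e - i) * k
          = (2 * ∑ i ∈ Finset.Ico 1 e, (e - i)) * k := by
        rw [← Finset.sum_mul]; ring
      rw [h2, gauss e]
    have h1 : e ≤ (e - 0) * c 0 := by rw [hc0]; omega
    omega
  -- eliminate truncated subtraction
  have hS3 : 2 * e + e * e * k ≤ 2 * S + e * k := by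
    rcases e with _ | m
    · simpa using hS2
    · have h4 : (m + 1) * (m + 1) * k = (m + 1) * ((m+1) - 1) * k + (m + 1) * k := by
        have : (m + 1) - 1 = m := rfl
        rw [this]; ring
      omega
  -- cast to ℚ
  have hσSQ : ((∑ u : V, G.dist v u : ℕ) : ℚ) + (S : ℚ) = (e : ℚ) * (n : ℚ) := by
    exact_mod_cast hσS
  have hS3Q : 2 * (e : ℚ) + (e : ℚ) * (e : ℚ) * (k : ℚ) ≤ 2 * (S : ℚ) + (e : ℚ) * (k : ℚ) := by
    exact_mod_cast hS3
  have hkpos : (0 : ℚ) < 2 * (k : ℚ) := by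
    rcases hk with rfl | rfl | rfl <;> norm_num
  rw [← add_div, ← add_div, le_div_iff₀ hkpos]
  rcases hk with rfl | rfl | rfl
  · have hDZ : (0 : ℤ) ≤ ((n : ℤ) - 3 * e) * ((n : ℤ) - 3 * e + 1) :=
      consec_nonneg ((n : ℤ) - 3 * e)
    have hDQ : (0 : ℚ) ≤ ((n : ℚ) - 3 * e) * ((n : ℚ) - 3 * e + 1) := by
      exact_mod_cast hDZ
    push_cast at hσSQ hS3Q ⊢
    nlinarith [hDQ, hσSQ, hS3Q]
  · have hDZ : (0 : ℤ) ≤ ((n : ℤ) - 4 * e + 1) * ((n : ℤ) - 4 * e + 1) :=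
      mul_self_nonneg _
    have hDQ : (0 : ℚ) ≤ ((n : ℚ) - 4 * e + 1) * ((n : ℚ) - 4 * e + 1) := by
      exact_mod_cast hDZ
    push_cast at hσSQ hS3Q ⊢
    nlinarith [hDQ, hσSQ, hS3Q]
  · have hDZ : (0 : ℤ) ≤ ((n : ℤ) - 5 * e + 1) * ((n : ℤ) - 5 * e + 2) := by
      have := consec_nonneg ((n : ℤ) - 5 * e + 1)
      nlinarith [this]
    have hDQ : (0 : ℚ) ≤ ((n : ℚ) - 5 * e + 1) * ((n : ℚ) - 5 * e + 2) := by
      exact_mod_cast hDZ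
    push_cast at hσSQ hS3Q ⊢
    nlinarith [hDQ, hσSQ, hS3Q]
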